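/- Let k ≥ 2. If there is a normal natural deduction proof of φ_k in M→ whose last rule discharges fewer than 2^k assumption occurrences of ξ_k, then there is a normal natural deduction proof of φ_{k-1} whose last rule discharges fewer than 2^{k-1} assumption occurrences of ξ_{k-1}. -/

import Mathlib

/-- Formulas of purely implicational logic, built from atoms (numbered by `ℕ`)
by the single connective `→` (`impl`). -/
inductive Fm : Type
  | atom : ℕ → Fm
  | impl : Fm → Fm → Fm
deriving DecidableEq

/-- χ[X,Y] = (((X → Y) → X) → X) → Y. -/
def chi (X Y : Fm) : Fm := (((X.impl Y).impl X).impl X).impl Y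

/-- The atom `Fm.atom 0` is C, and `Fm.atom k` is D_k for k ≥ 1.
ξ₁ = χ[D₁, C] and ξ_{i+1} = χ[D_{i+1}, ξ_i]  (the value at 0 is irrelevant). -/
def xi : ℕ → Fm
  | 0 => chi (.atom 1) (.atom 0)
  | 1 => chi (.atom 1) (.atom 0)
  | n + 2 => chi (.atom (n + 2)) (xi (n + 1))

/-- φ_n = ξ_n → C. -/
def phi (n : ℕ) : Fm := (xi n).impl (.atom 0)

/-- Natural deduction derivations for M→, indexed by the multiset of open
assumption occurrences and the conclusion.  `assume a` is a one-occurrence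
assumption of `a`; `intro n` is →-introduction discharging exactly `n`
occurrences of the assumption `a`; `elim` is →-elimination whose second
premise (the implication) is the major premise. -/
inductive Deriv : Multiset Fm → Fm → Type
  | assume (a : Fm) : Deriv {a} a
  | intro {Γ : Multiset Fm} {a b : Fm} (n : ℕ)
      (d : Deriv (Γ + Multiset.replicate n a) b) : Deriv Γ (a.impl b)
  | elim {Γ Δ : Multiset Fm} {a b : Fm}
      (minor : Deriv Γ a) (major : Deriv Δ (a.impl b)) : Deriv (Γ + Δ) b

/-- The last rule of the derivation is an →-introduction. -/
def Deriv.isIntro : ∀ {Γ b}, Deriv Γ b → Prop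
  | _, _, .intro _ _ => True
  | _, _, _ => False

/-- A derivation is normal if no formula occurrence is both the conclusion of
an →-introduction and the major premise of an →-elimination. -/
def Deriv.normal : ∀ {Γ b}, Deriv Γ b → Prop
  | _, _, .assume _ => True
  | _, _, .intro _ d => d.normal
  | _, _, .elim minor major => minor.normal ∧ major.normal ∧ ¬ major.isIntro

-- ===================== infrastructure =====================

def Deriv.isElim : ∀ {Γ b}, Deriv Γ b → Prop
  | _, _, .elim _ _ => True
  | _, _, _ => False

/-- every intro in the outermost intro-chain discharges 0 occurrences -/
def Zok : ∀ {Γ b}, Deriv Γ b → Prop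
  | _, _, .intro n d => n = 0 ∧ Zok d
  | _, _, _ => True

@[simp] lemma isIntro_assume (a : Fm) : (Deriv.assume a).isIntro = False := rfl
@[simp] lemma isIntro_intro {Γ : Multiset Fm} {a b : Fm} {n : ℕ}
    (d : Deriv (Γ + Multiset.replicate n a) b) : (Deriv.intro n d).isIntro = True := rfl
@[simp] lemma isIntro_elim {Γ Δ : Multiset Fm} {a b : Fm} (m : Deriv Γ a)
    (M : Deriv Δ (a.impl b)) : (Deriv.elim m M).isIntro = False := rfl
@[simp] lemma isElim_assume (a : Fm) : (Deriv.assume a).isElim = False := rfl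
@[simp] lemma isElim_intro {Γ : Multiset Fm} {a b : Fm} {n : ℕ}
    (d : Deriv (Γ + Multiset.replicate n a) b) : (Deriv.intro n d).isElim = False := rfl
@[simp] lemma isElim_elim {Γ Δ : Multiset Fm} {a b : Fm} (m : Deriv Γ a)
    (M : Deriv Δ (a.impl b)) : (Deriv.elim m M).isElim = True := rfl
@[simp] lemma normal_assume (a : Fm) : (Deriv.assume a).normal = True := rfl
@[simp] lemma normal_intro {Γ : Multiset Fm} {a b : Fm} {n : ℕ}
    (d : Deriv (Γ + Multiset.replicate n a) b) : (Deriv.intro n d).normal = d.normal := rfl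
@[simp] lemma normal_elim {Γ Δ : Multiset Fm} {a b : Fm} (m : Deriv Γ a)
    (M : Deriv Δ (a.impl b)) :
    (Deriv.elim m M).normal = (m.normal ∧ M.normal ∧ ¬ M.isIntro) := rfl
@[simp] lemma Zok_assume (a : Fm) : Zok (Deriv.assume a) = True := rfl
@[simp] lemma Zok_intro {Γ : Multiset Fm} {a b : Fm} {n : ℕ}
    (d : Deriv (Γ + Multiset.replicate n a) b) : Zok (Deriv.intro n d) = (n = 0 ∧ Zok d) := rfl
@[simp] lemma Zok_elim {Γ Δ : Multiset Fm} {a b : Fm} (m : Deriv Γ a)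
    (M : Deriv Δ (a.impl b)) : Zok (Deriv.elim m M) = True := rfl

def Deriv.cctx {Γ Γ' : Multiset Fm} {c : Fm} (h : Γ = Γ') (d : Deriv Γ c) : Deriv Γ' c := h ▸ d
def Deriv.ccon {Γ : Multiset Fm} {c c' : Fm} (h : c = c') (d : Deriv Γ c) : Deriv Γ c' := h ▸ d

@[simp] lemma cctx_normal {Γ Γ' : Multiset Fm} {c : Fm} (h : Γ = Γ') (d : Deriv Γ c) :
    (d.cctx h).normal ↔ d.normal := by subst h; exact Iff.rfl
@[simp] lemma cctx_isIntro {Γ Γ' : Multiset Fm} {c : Fm} (h : Γ = Γ') (d : Deriv Γ c) :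
    (d.cctx h).isIntro ↔ d.isIntro := by subst h; exact Iff.rfl
@[simp] lemma cctx_Zok {Γ Γ' : Multiset Fm} {c : Fm} (h : Γ = Γ') (d : Deriv Γ c) :
    Zok (d.cctx h) ↔ Zok d := by subst h; exact Iff.rfl
@[simp] lemma ccon_normal {Γ : Multiset Fm} {c c' : Fm} (h : c = c') (d : Deriv Γ c) :
    (d.ccon h).normal ↔ d.normal := by subst h; exact Iff.rfl
@[simp] lemma ccon_isIntro {Γ : Multiset Fm} {c c' : Fm} (h : c = c') (d : Deriv Γ c) :
    (d.ccon h).isIntro ↔ d.isIntro := by subst h; exact Iff.rfl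
@[simp] lemma ccon_Zok {Γ : Multiset Fm} {c c' : Fm} (h : c = c') (d : Deriv Γ c) :
    Zok (d.ccon h) ↔ Zok d := by subst h; exact Iff.rfl

-- ===================== tails =====================

def tails : Fm → List Fm
  | .atom i => [.atom i]
  | .impl a b => .impl a b :: tails b

def ptails : Fm → List Fm
  | .atom _ => []
  | .impl _ b => tails b

lemma mem_tails_self (t : Fm) : t ∈ tails t := by
  cases t <;> simp [tails]

lemma tails_step : ∀ {t x y : Fm}, Fm.impl x y ∈ tails t → y ∈ tails t := by
  intro t
  induction t with
  | atom i => intro x y h; simp [tails] at h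
  | impl a b iha ihb =>
    intro x y h
    rw [tails, List.mem_cons] at h
    rw [tails, List.mem_cons]
    rcases h with h | h
    · injection h with h1 h2
      subst h2
      exact Or.inr (mem_tails_self _)
    · exact Or.inr (ihb h)

lemma ptails_step {g x y : Fm} (h : Fm.impl x y ∈ ptails g) : y ∈ ptails g := by
  cases g with
  | atom i => simp [ptails] at h
  | impl a b => exact tails_step h

lemma spine : ∀ {Γ : Multiset Fm} {c : Fm} (d : Deriv Γ c),
    d.normal → d.isElim → ∃ g ∈ Γ, c ∈ ptails g := by
  intro Γ c d
  induction d with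
  | assume a => intro _ h; simp [Deriv.isElim] at h
  | intro n d ih => intro _ h; simp [Deriv.isElim] at h
  | elim minor major ihm ihM =>
    rename_i Γ₁ Γ₂ a c
    intro hn _
    obtain ⟨h1, h2, h3⟩ := hn
    cases major with
    | assume =>
      refine ⟨Fm.impl a c, by simp, ?_⟩
      show _ ∈ ptails (Fm.impl _ _)
      rw [ptails]; exact mem_tails_self _
    | intro n d => simp [Deriv.isIntro] at h3
    | elim m2 M2 =>
      obtain ⟨g, hg, hp⟩ := ihM h2 trivial
      exact ⟨g, Multiset.mem_add.mpr (Or.inr hg), ptails_step hp⟩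

-- ===================== the formula zoo =====================

def tg : ℕ → Fm
  | 0 => .atom 0
  | 1 => .atom 0
  | (j+2) => xi (j+1)

def DT (j : ℕ) : Fm := (Fm.atom j).impl (tg j)
def Bf (j : ℕ) : Fm := (DT j).impl (.atom j)
def Af (j : ℕ) : Fm := (Bf j).impl (.atom j)

lemma xi_eq : ∀ {j : ℕ}, 1 ≤ j → xi j = (Af j).impl (tg j)
  | 1, _ => rfl
  | (_+2), _ => rfl

lemma tg_ge2 {j : ℕ} (h : 2 ≤ j) : tg j = xi (j-1) := by
  obtain ⟨i, rfl⟩ : ∃ i, j = i + 2 := ⟨j - 2, by omega⟩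
  simp [tg]

lemma tg_cases (j : ℕ) : tg j = .atom 0 ∨ (2 ≤ j ∧ tg j = xi (j-1)) := by
  match j with
  | 0 => left; rfl
  | 1 => left; rfl
  | (j+2) => right; exact ⟨by omega, tg_ge2 (by omega)⟩

lemma DT_inj {i j : ℕ} (h : DT i = DT j) : i = j := by
  simp only [DT, Fm.impl.injEq, Fm.atom.injEq] at h; exact h.1
lemma Bf_inj {i j : ℕ} (h : Bf i = Bf j) : i = j := by
  simp only [Bf, Fm.impl.injEq, Fm.atom.injEq] at h; exact h.2
lemma Af_inj {i j : ℕ} (h : Af i = Af j) : i = j := by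
  simp only [Af, Fm.impl.injEq, Fm.atom.injEq] at h; exact h.2

lemma Bf_ne_DT (i j : ℕ) : Bf i ≠ DT j := by simp [Bf, DT]
lemma Af_ne_DT (i j : ℕ) : Af i ≠ DT j := by simp [Af, Bf, DT]
lemma Af_ne_Bf (i j : ℕ) : Af i ≠ Bf j := by simp [Af, Bf, DT]
lemma Bf_ne_atom (i j : ℕ) : Bf i ≠ .atom j := by simp [Bf]
lemma Af_ne_atom (i j : ℕ) : Af i ≠ .atom j := by simp [Af]
lemma DT_ne_atom (i j : ℕ) : DT i ≠ .atom j := by simp [DT]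

lemma xi_ne_atom {j i : ℕ} (hj : 1 ≤ j) : xi j ≠ .atom i := by
  rw [xi_eq hj]; simp
lemma xi_ne_Af {j i : ℕ} (hj : 1 ≤ j) : xi j ≠ Af i := by
  rw [xi_eq hj]; intro h
  simp only [Af, Fm.impl.injEq] at h
  exact Af_ne_Bf j i h.1
lemma xi_ne_Bf {j i : ℕ} (hj : 1 ≤ j) : xi j ≠ Bf i := by
  rw [xi_eq hj]; intro h
  simp only [Bf, Fm.impl.injEq] at h
  exact Af_ne_DT j i h.1
lemma xi_ne_DT {j i : ℕ} (hj : 1 ≤ j) : xi j ≠ DT i := by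
  rw [xi_eq hj]; intro h
  simp only [DT, Fm.impl.injEq] at h
  exact Af_ne_atom j i h.1
lemma xi_inj {i j : ℕ} (hi : 1 ≤ i) (hj : 1 ≤ j) (h : xi i = xi j) : i = j := by
  rw [xi_eq hi, xi_eq hj] at h
  simp only [Fm.impl.injEq] at h
  exact Af_inj h.1

lemma tg_ne_Bf {j i : ℕ} : tg j ≠ Bf i := by
  rcases tg_cases j with h | ⟨h2, h⟩ <;> rw [h]
  · simp [Bf]
  · exact xi_ne_Bf (by omega)
lemma tg_ne_Af {j i : ℕ} : tg j ≠ Af i := by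
  rcases tg_cases j with h | ⟨h2, h⟩ <;> rw [h]
  · simp [Af]
  · exact xi_ne_Af (by omega)
lemma tg_ne_DT {j i : ℕ} : tg j ≠ DT i := by
  rcases tg_cases j with h | ⟨h2, h⟩ <;> rw [h]
  · simp [DT]
  · exact xi_ne_DT (by omega)
lemma tg_ne_atom_pos {j i : ℕ} (hi : 1 ≤ i) : tg j ≠ .atom i := by
  rcases tg_cases j with h | ⟨h2, h⟩ <;> rw [h]
  · intro hh
    have : (0:ℕ) = i := by simpa using hh
    omega
  · exact xi_ne_atom (by omega)

lemma mem_tails_tg : ∀ (j : ℕ) {t : Fm}, t ∈ tails (tg j) →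
    t = Fm.atom 0 ∨ ∃ i, 1 ≤ i ∧ i + 1 ≤ j ∧ t = xi i := by
  intro j
  induction j using Nat.strong_induction_on with
  | _ j ih =>
    match j with
    | 0 => intro t h; left; simpa [tg, tails] using h
    | 1 => intro t h; left; simpa [tg, tails] using h
    | (j+2) =>
      intro t h
      have he : tg (j+2) = Fm.impl (Af (j+1)) (tg (j+1)) := by
        rw [show tg (j+2) = xi (j+1) from rfl, xi_eq (by omega)]
      rw [he, tails, List.mem_cons] at h
      rcases h with h | h
      · right; exact ⟨j+1, by omega, by omega, by rw [h, ← xi_eq (by omega : 1 ≤ j+1)]⟩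
      · rcases ih (j+1) (by omega) h with h0 | ⟨i, h1, h2, h3⟩
        · left; exact h0
        · right; exact ⟨i, h1, by omega, h3⟩

-- ===================== predicates =====================

def lowF (k : ℕ) (x : Fm) : Prop :=
  ∃ j, 1 ≤ j ∧ j + 1 ≤ k ∧ (x = .atom j ∨ x = Bf j ∨ x = Af j ∨ x = DT j)

def Entry (k : ℕ) (c : Fm) : Prop :=
  c = .atom 0 ∨ ∃ j, 1 ≤ j ∧ j + 1 ≤ k ∧
    (c = .atom j ∨ c = xi j ∨ c = Af j ∨ c = Bf j ∨ c = DT j)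

lemma mem_strip {Γ : Multiset Fm} {y x : Fm} {n : ℕ}
    (h : x ∈ Γ + Multiset.replicate n y) (hne : x ≠ y) : x ∈ Γ := by
  rcases Multiset.mem_add.mp h with h | h
  · exact h
  · exact absurd (Multiset.eq_of_mem_replicate h) hne

lemma ptails_char {k : ℕ} (hk : 2 ≤ k) {g t : Fm}
    (hg : g = xi k ∨ g = Bf k ∨ g = Fm.atom k ∨ lowF k g) (ht : t ∈ ptails g) :
    (∃ j, j ≤ k ∧ t = Fm.atom j) ∨ (∃ i, 1 ≤ i ∧ i + 1 ≤ k ∧ t = xi i) := by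
  rcases hg with rfl | rfl | rfl | ⟨j, h1, h2, (rfl | rfl | rfl | rfl)⟩
  · rw [xi_eq (by omega : 1 ≤ k)] at ht
    rw [show ptails ((Af k).impl (tg k)) = tails (tg k) from rfl] at ht
    rcases mem_tails_tg k ht with h | ⟨i, hi1, hi2, hi3⟩
    · exact Or.inl ⟨0, by omega, h⟩
    · exact Or.inr ⟨i, hi1, by omega, hi3⟩
  · left; refine ⟨k, le_rfl, ?_⟩; simpa [Bf, ptails, tails] using ht
  · simp [ptails] at ht
  · simp [ptails] at ht
  · left; refine ⟨j, by omega, ?_⟩; simpa [Bf, ptails, tails] using ht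
  · left; refine ⟨j, by omega, ?_⟩; simpa [Af, ptails, tails] using ht
  · rw [show ptails (DT j) = tails (tg j) from rfl] at ht
    rcases mem_tails_tg j ht with h | ⟨i, hi1, hi2, hi3⟩
    · exact Or.inl ⟨0, by omega, h⟩
    · exact Or.inr ⟨i, hi1, by omega, hi3⟩

lemma entry_ne_K {k : ℕ} (hk : 2 ≤ k) {c : Fm} (h : Entry k c) : c ≠ xi k := by
  rcases h with rfl | ⟨j, h1, h2, (rfl | rfl | rfl | rfl | rfl)⟩
  · exact fun hh => xi_ne_atom (by omega) hh.symm
  · exact fun hh => xi_ne_atom (by omega) hh.symm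
  · intro hh; have := xi_inj (by omega) (by omega) hh; omega
  · exact fun hh => xi_ne_Af (by omega) hh.symm
  · exact fun hh => xi_ne_Bf (by omega) hh.symm
  · exact fun hh => xi_ne_DT (by omega) hh.symm

lemma Entry_tg {k : ℕ} (hk : 2 ≤ k) {j : ℕ} (h1 : 1 ≤ j) (h2 : j ≤ k) : Entry k (tg j) := by
  rcases tg_cases j with h | ⟨hj2, h⟩
  · exact Or.inl h
  · exact Or.inr ⟨j - 1, by omega, by omega, Or.inr (Or.inl h)⟩

lemma entry_impl {k : ℕ} (hk : 2 ≤ k) {a b : Fm} (he : Entry k (a.impl b)) :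
    ∃ j, 1 ≤ j ∧ j + 1 ≤ k ∧
      ((a = Af j ∧ b = tg j) ∨ (a = Bf j ∧ b = .atom j) ∨ (a = DT j ∧ b = .atom j) ∨
       (a = .atom j ∧ b = tg j)) := by
  rcases he with h | ⟨j, h1, h2, (h | h | h | h | h)⟩
  · exact absurd h (by simp)
  · exact absurd h (by simp)
  · rw [xi_eq (by omega)] at h; injection h with u v
    exact ⟨j, h1, h2, Or.inl ⟨u, v⟩⟩
  · simp only [Af] at h; injection h with u v
    exact ⟨j, h1, h2, Or.inr (Or.inl ⟨u, v⟩)⟩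
  · simp only [Bf] at h; injection h with u v
    exact ⟨j, h1, h2, Or.inr (Or.inr (Or.inl ⟨u, v⟩))⟩
  · simp only [DT] at h; injection h with u v
    exact ⟨j, h1, h2, Or.inr (Or.inr (Or.inr ⟨u, v⟩))⟩

-- ===================== lemma DBB =====================

lemma DBB {k : ℕ} (hk : 2 ≤ k) : ∀ {Γ : Multiset Fm} {c : Fm} (d : Deriv Γ c), d.normal →
    (∀ x ∈ Γ, x = Bf k ∨ x = Fm.atom k ∨ lowF k x) →
    ∀ l, 1 ≤ l → l + 1 ≤ k → (c = Fm.atom l ∨ c = Bf l) →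
    (Fm.atom l ∈ Γ ∨ Bf l ∈ Γ) := by
  intro Γ c d
  induction d with
  | assume a =>
    intro _ _ l h1 h2 hc
    rcases hc with rfl | rfl
    · exact Or.inl (Multiset.mem_singleton_self _)
    · exact Or.inr (Multiset.mem_singleton_self _)
  | intro n body ih =>
    rename_i Γ' aa bb
    intro hn hΓ l h1 h2 hc
    rcases hc with hc | hc
    · exact absurd hc (by simp)
    · simp only [Bf] at hc; injection hc with u v
      subst u; subst v
      have hres := ih hn (by
        intro x hx
        rcases Multiset.mem_add.mp hx with hx | hx
        · exact hΓ x hx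
        · refine Or.inr (Or.inr ⟨l, h1, h2, ?_⟩)
          rw [Multiset.eq_of_mem_replicate hx]
          exact Or.inr (Or.inr (Or.inr rfl))) l h1 h2 (Or.inl rfl)
      rcases hres with h | h
      · exact Or.inl (mem_strip h (fun hh => DT_ne_atom l l hh.symm))
      · exact Or.inr (mem_strip h (Bf_ne_DT l l))
  | elim minor major ihm ihM =>
    rename_i Γ₁ Γ₂ aa cc
    intro hn hΓ l h1 h2 hc
    obtain ⟨hm, hM, hni⟩ := hn
    rcases hc with hc | hc
    · subst hc
      cases major with
      | assume =>
        have hg := hΓ (aa.impl (.atom l)) (by simp)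
        rcases hg with hg | hg | ⟨j, hj1, hj2, (hj | hj | hj | hj)⟩
        · simp only [Bf] at hg; injection hg with u v; injection v with v; omega
        · exact absurd hg (by simp)
        · exact absurd hj (by simp)
        · simp only [Bf] at hj; injection hj with u v; injection v with v
          subst v; subst u
          right
          refine Multiset.mem_add.mpr (Or.inr ?_)
          rw [show Bf l = (DT l).impl (Fm.atom l) from rfl]
          simp
        · simp only [Af] at hj; injection hj with u v; injection v with v
          subst v; subst u
          have hres := ihm hm (fun x hx => hΓ x (Multiset.mem_add.mpr (Or.inl hx))) l h1 h2 (Or.inr rfl)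
          rcases hres with h | h
          · exact Or.inl (Multiset.mem_add.mpr (Or.inl h))
          · exact Or.inr (Multiset.mem_add.mpr (Or.inl h))
        · simp only [DT] at hj; injection hj with u v
          exact absurd v.symm (tg_ne_atom_pos h1)
      | intro nn dd => simp [Deriv.isIntro] at hni
      | elim m2 M2 =>
        obtain ⟨g, hg, hpt⟩ := spine _ hM trivial
        have hgt := hΓ g (Multiset.mem_add.mpr (Or.inr hg))
        rcases ptails_char hk (Or.inr hgt) hpt with ⟨j, hj, hj2⟩ | ⟨i, hi1, hi2, hi3⟩
        · exact absurd hj2 (by simp)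
        · rw [xi_eq hi1] at hi3; injection hi3 with u v
          exact absurd v.symm (tg_ne_atom_pos h1)
    · subst hc
      exfalso
      obtain ⟨g, hg, hpt⟩ := spine (Deriv.elim minor major) ⟨hm, hM, hni⟩ trivial
      have hgt := hΓ g hg
      rcases ptails_char hk (Or.inr hgt) hpt with ⟨j, hj, hj2⟩ | ⟨i, hi1, hi2, hi3⟩
      · exact Bf_ne_atom l j hj2
      · exact xi_ne_Bf hi1 hi3.symm

-- ===================== lemma H =====================

lemma Hlem {k : ℕ} (hk : 2 ≤ k) : ∀ {Γ : Multiset Fm} {c : Fm} (d : Deriv Γ c), d.normal →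
    (∀ x ∈ Γ, x = Bf k ∨ x = Fm.atom k ∨ lowF k x) →
    ∀ j, 1 ≤ j → j ≤ k → c = tg j →
    ∃ l, 1 ≤ l ∧ l + 1 ≤ k ∧ DT l ∈ Γ ∧ (Fm.atom l ∈ Γ ∨ Bf l ∈ Γ) := by
  intro Γ c d
  induction d with
  | assume a =>
    intro _ hΓ j h1 h2 hc
    exfalso
    rcases hΓ a (Multiset.mem_singleton_self a) with h | h | ⟨i, hi1, hi2, (h | h | h | h)⟩
    · exact tg_ne_Bf (hc.symm.trans h)
    · exact tg_ne_atom_pos (by omega) (hc.symm.trans h)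
    · exact tg_ne_atom_pos (by omega) (hc.symm.trans h)
    · exact tg_ne_Bf (hc.symm.trans h)
    · exact tg_ne_Af (hc.symm.trans h)
    · exact tg_ne_DT (hc.symm.trans h)
  | intro n body ih =>
    rename_i Γ' aa bb
    intro hn hΓ j h1 h2 hc
    rcases tg_cases j with h | ⟨hj2, h⟩
    · rw [h] at hc; exact absurd hc (by simp)
    · rw [h, xi_eq (by omega : 1 ≤ j - 1)] at hc
      injection hc with u v
      subst u; subst v
      obtain ⟨l, hl1, hl2, hmem, hwit⟩ := ih hn (by
        intro x hx
        rcases Multiset.mem_add.mp hx with hx | hx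
        · exact hΓ x hx
        · refine Or.inr (Or.inr ⟨j - 1, by omega, by omega, ?_⟩)
          rw [Multiset.eq_of_mem_replicate hx]
          exact Or.inr (Or.inr (Or.inl rfl))) (j - 1) (by omega) (by omega) rfl
      refine ⟨l, hl1, hl2, mem_strip hmem (fun hh => Af_ne_DT (j-1) l hh.symm), ?_⟩
      rcases hwit with h' | h'
      · exact Or.inl (mem_strip h' (fun hh => Af_ne_atom (j-1) l hh.symm))
      · exact Or.inr (mem_strip h' (fun hh => Af_ne_Bf (j-1) l hh.symm))
  | elim minor major ihm ihM =>
    rename_i Γ₁ Γ₂ aa cc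
    intro hn hΓ j h1 h2 hc
    obtain ⟨hm, hM, hni⟩ := hn
    subst hc
    cases major with
    | assume =>
      have hg := hΓ (aa.impl (tg j)) (by simp)
      rcases hg with hg | hg | ⟨i, hi1, hi2, (hi | hi | hi | hi)⟩
      · simp only [Bf] at hg; injection hg with u v
        exact absurd v (tg_ne_atom_pos (by omega))
      · exact absurd hg (by simp)
      · exact absurd hi (by simp)
      · simp only [Bf] at hi; injection hi with u v
        exact absurd v (tg_ne_atom_pos (by omega))
      · simp only [Af] at hi; injection hi with u v
        exact absurd v (tg_ne_atom_pos (by omega))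
      · simp only [DT] at hi; injection hi with u v
        subst u
        have hres := DBB hk minor hm (fun x hx => hΓ x (Multiset.mem_add.mpr (Or.inl hx))) i hi1 hi2 (Or.inl rfl)
        refine ⟨i, hi1, hi2, ?_, ?_⟩
        · have hDT : Fm.impl (Fm.atom i) (tg j) = DT i := by rw [DT, v]
          refine Multiset.mem_add.mpr (Or.inr ?_)
          rw [← hDT]; simp
        · rcases hres with h | h
          · exact Or.inl (Multiset.mem_add.mpr (Or.inl h))
          · exact Or.inr (Multiset.mem_add.mpr (Or.inl h))
    | intro nn dd => simp [Deriv.isIntro] at hni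
    | elim m2 M2 =>
      obtain ⟨g, hg, hpt⟩ := spine _ hM trivial
      have hgt := hΓ g (Multiset.mem_add.mpr (Or.inr hg))
      rcases ptails_char hk (Or.inr hgt) hpt with ⟨j', hj', hj2⟩ | ⟨i, hi1, hi2, hi3⟩
      · exact absurd hj2 (by simp)
      · rw [xi_eq hi1] at hi3; injection hi3 with u v
        subst u
        obtain ⟨l, hl1, hl2, hmem, hwit⟩ := ihM hM
          (fun x hx => hΓ x (Multiset.mem_add.mpr (Or.inr hx))) (i+1) (by omega) (by omega) (by
            rw [tg_ge2 (by omega : 2 ≤ i+1), Nat.add_sub_cancel, xi_eq hi1, v])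
        refine ⟨l, hl1, hl2, Multiset.mem_add.mpr (Or.inr hmem), ?_⟩
        rcases hwit with h' | h'
        · exact Or.inl (Multiset.mem_add.mpr (Or.inr h'))
        · exact Or.inr (Multiset.mem_add.mpr (Or.inr h'))

-- ===================== lemma Dk =====================

lemma DkLem {k : ℕ} (hk : 2 ≤ k) : ∀ {Γ : Multiset Fm} {c : Fm} (f : Deriv Γ c), f.normal →
    (∀ x ∈ Γ, x = Bf k ∨ lowF k x) → (c = Fm.atom k ∨ c = DT k) →
    ∃ l, 1 ≤ l ∧ l + 1 ≤ k ∧ DT l ∈ Γ ∧ (Fm.atom l ∈ Γ ∨ Bf l ∈ Γ) := by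
  intro Γ c f
  induction f with
  | assume a =>
    intro _ hΓ hc
    exfalso
    rcases hc with rfl | rfl <;>
      rcases hΓ _ (Multiset.mem_singleton_self _) with h | ⟨i, hi1, hi2, (h | h | h | h)⟩
    · exact Bf_ne_atom k k h.symm
    · injection h with h; omega
    · exact Bf_ne_atom i k h.symm
    · exact Af_ne_atom i k h.symm
    · exact DT_ne_atom i k h.symm
    · exact Bf_ne_DT k k h.symm
    · exact DT_ne_atom k i h
    · exact Bf_ne_DT i k h.symm
    · exact Af_ne_DT i k h.symm
    · have := DT_inj h; omega
  | intro n body ih =>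
    rename_i Γ' aa bb
    intro hn hΓ hc
    rcases hc with hc | hc
    · exact absurd hc (by simp)
    · simp only [DT] at hc; injection hc with u v
      subst u; subst v
      obtain ⟨l, h1, h2, hmem, hwit⟩ := Hlem hk body hn (by
        intro x hx
        rcases Multiset.mem_add.mp hx with hx | hx
        · rcases hΓ x hx with h | h
          · exact Or.inl h
          · exact Or.inr (Or.inr h)
        · exact Or.inr (Or.inl (Multiset.eq_of_mem_replicate hx))) k (by omega) le_rfl rfl
      refine ⟨l, h1, h2, mem_strip hmem (DT_ne_atom l k), ?_⟩
      rcases hwit with h' | h'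
      · exact Or.inl (mem_strip h' (by intro hh; injection hh with hh; omega))
      · exact Or.inr (mem_strip h' (Bf_ne_atom l k))
  | elim minor major ihm ihM =>
    rename_i Γ₁ Γ₂ aa cc
    intro hn hΓ hc
    obtain ⟨hm, hM, hni⟩ := hn
    cases major with
    | assume =>
      have hg := hΓ (aa.impl cc) (by simp)
      rcases hc with rfl | rfl
      · rcases hg with hg | ⟨i, hi1, hi2, (hi | hi | hi | hi)⟩
        · simp only [Bf] at hg; injection hg with u v
          subst u
          obtain ⟨l, h1, h2, hmem, hwit⟩ := ihm hm
            (fun x hx => hΓ x (Multiset.mem_add.mpr (Or.inl hx))) (Or.inr rfl)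
          refine ⟨l, h1, h2, Multiset.mem_add.mpr (Or.inl hmem), ?_⟩
          rcases hwit with h' | h'
          · exact Or.inl (Multiset.mem_add.mpr (Or.inl h'))
          · exact Or.inr (Multiset.mem_add.mpr (Or.inl h'))
        · exact absurd hi (by simp)
        · simp only [Bf] at hi; injection hi with u v; injection v with v; omega
        · simp only [Af] at hi; injection hi with u v; injection v with v; omega
        · simp only [DT] at hi; injection hi with u v
          exact absurd v.symm (tg_ne_atom_pos (by omega))
      · exfalso
        rcases hg with hg | ⟨i, hi1, hi2, (hi | hi | hi | hi)⟩
        · simp only [Bf] at hg; injection hg with u v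
          exact DT_ne_atom k k v
        · exact (by simp : (aa.impl (DT k)) ≠ Fm.atom i) hi
        · simp only [Bf] at hi; injection hi with u v
          exact DT_ne_atom k i v
        · simp only [Af] at hi; injection hi with u v
          exact DT_ne_atom k i v
        · simp only [DT] at hi; injection hi with u v
          exact tg_ne_DT v.symm
    | intro nn dd => simp [Deriv.isIntro] at hni
    | elim m2 M2 =>
      exfalso
      obtain ⟨g, hg, hpt⟩ := spine _ hM trivial
      have hgt := hΓ g (Multiset.mem_add.mpr (Or.inr hg))
      have hgt' : g = xi k ∨ g = Bf k ∨ g = Fm.atom k ∨ lowF k g := by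
        rcases hgt with h | h
        · exact Or.inr (Or.inl h)
        · exact Or.inr (Or.inr (Or.inr h))
      rcases ptails_char hk hgt' hpt with ⟨j', hj', hj2⟩ | ⟨i, hi1, hi2, hi3⟩
      · exact (by simp : (aa.impl cc) ≠ Fm.atom j') hj2
      · rw [xi_eq hi1] at hi3; injection hi3 with u v
        rcases hc with rfl | rfl
        · exact tg_ne_atom_pos (by omega) v.symm
        · exact tg_ne_DT v.symm

-- =====================

lemma Echain {k : ℕ} (hk : 2 ≤ k) : ∀ {Γ₁ : Multiset Fm} (E : Deriv Γ₁ (Af k)), E.normal →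
    (∀ x ∈ Γ₁, lowF k x) →
    ∃ l, 1 ≤ l ∧ l + 1 ≤ k ∧ DT l ∈ Γ₁ ∧ (Fm.atom l ∈ Γ₁ ∨ Bf l ∈ Γ₁) := by
  intro Γ₁ E hn hlow
  cases E with
  | assume =>
    exfalso
    rcases hlow _ (Multiset.mem_singleton_self _) with ⟨i, hi1, hi2, (h | h | h | h)⟩
    · exact Af_ne_atom k i h
    · exact Af_ne_Bf k i h
    · have := Af_inj h; omega
    · exact Af_ne_DT k i h
  | intro n body =>
    change body.normal at hn
    obtain ⟨l, h1, h2, hmem, hwit⟩ := DkLem hk body hn (by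
      intro x hx
      rcases Multiset.mem_add.mp hx with hx | hx
      · exact Or.inr (hlow x hx)
      · exact Or.inl (Multiset.eq_of_mem_replicate hx)) (Or.inl rfl)
    refine ⟨l, h1, h2, mem_strip hmem (fun hh => Bf_ne_DT k l hh.symm), ?_⟩
    rcases hwit with h' | h'
    · exact Or.inl (mem_strip h' (fun hh => Bf_ne_atom k l hh.symm))
    · exact Or.inr (mem_strip h' (fun hh => (by have := Bf_inj hh; omega : False)))
  | elim minor major =>
    exfalso
    obtain ⟨hm, hM, hni⟩ := hn
    obtain ⟨g, hg, hpt⟩ := spine (Deriv.elim minor major) ⟨hm, hM, hni⟩ trivial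
    have hgt' : g = xi k ∨ g = Bf k ∨ g = Fm.atom k ∨ lowF k g :=
      Or.inr (Or.inr (Or.inr (hlow g hg)))
    rcases ptails_char hk hgt' hpt with ⟨j', hj', hj2⟩ | ⟨i, hi1, hi2, hi3⟩
    · exact Af_ne_atom k j' hj2
    · exact xi_ne_Af hi1 hi3.symm

-- ===================== lifting =====================

lemma liftDeriv {k : ℕ} (hk : 2 ≤ k) : ∀ (i : ℕ) {Γ : Multiset Fm} (j : ℕ), 1 ≤ j →
    ∀ (e : Deriv Γ (tg j)), e.normal → Zok e →
    ∃ e' : Deriv Γ (tg (j + i)), e'.normal ∧ Zok e' := by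
  intro i
  induction i with
  | zero => intro Γ j hj e hn hz; exact ⟨e, hn, hz⟩
  | succ i ih =>
    intro Γ j hj e hn hz
    obtain ⟨e', hn', hz'⟩ := ih j hj e hn hz
    have h2 : tg (j + (i+1)) = (Af (j+i)).impl (tg (j+i)) := by
      have h3 : j + (i+1) = (j + i) + 1 := by omega
      rw [h3, tg_ge2 (by omega), Nat.add_sub_cancel, xi_eq (by omega)]
    refine ⟨(Deriv.intro 0 (e'.cctx (by simp :
        Γ = Γ + Multiset.replicate 0 (Af (j+i))))).ccon h2.symm, ?_, ?_⟩
    · simp [hn']; exact (cctx_normal _ e').mpr hn'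
    · simp [hz']; exact And.intro rfl ((cctx_Zok _ e').mpr hz')

-- ===================== multiset helpers =====================

lemma filt_split (Δ : Multiset Fm) (a : Fm) :
    Δ = Δ.filter (· ≠ a) + Multiset.replicate (Δ.count a) a := by
  ext x
  rw [Multiset.count_add, Multiset.count_filter, Multiset.count_replicate]
  by_cases hx : x = a
  · subst hx; simp
  · rw [if_pos hx, if_neg (fun hh => hx hh.symm), Nat.add_zero]

lemma count_filter_ne {Δ : Multiset Fm} {a x : Fm} (h : x ≠ a) :
    (Δ.filter (· ≠ a)).count x = Δ.count x := by
  rw [Multiset.count_filter, if_pos h]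

lemma count_filter_self (Δ : Multiset Fm) (a : Fm) : (Δ.filter (· ≠ a)).count a = 0 := by
  rw [Multiset.count_filter, if_neg (by simp)]

lemma xi_ne_tg {k : ℕ} (hk : 2 ≤ k) : xi k ≠ tg k := by
  rw [tg_ge2 hk]
  intro hh
  have := xi_inj (by omega) (by omega) hh
  omega

-- ===================== the main transformation =====================

lemma Main {k : ℕ} (hk : 2 ≤ k) : ∀ {Γ : Multiset Fm} {c : Fm} (d : Deriv Γ c),
    d.normal →
    ∀ S : Fm → Prop, (∀ x ∈ Γ, S x) →
    (∀ x, S x → x = xi k ∨ lowF k x) →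
    (∀ l, 1 ≤ l → l + 1 ≤ k → S (DT l) → S (Af l)) →
    Entry k c →
    (∀ l, 1 ≤ l → l + 1 ≤ k → c = Bf l → S (Af l)) →
    ((∃ (Δ : Multiset Fm) (d' : Deriv Δ c), d'.normal ∧ (d'.isIntro → d.isIntro) ∧
        Δ.count (xi k) = 0 ∧ (∀ x, x ≠ tg k → Δ.count x ≤ Γ.count x) ∧
        2 * Δ.count (tg k) ≤ Γ.count (xi k)) ∨
     (∃ (Γ' : Multiset Fm) (e : Deriv Γ' c), e.normal ∧ (¬ d.isIntro → Zok e) ∧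
        (∀ x ∈ Γ', S x) ∧ Γ'.count (xi k) < Γ.count (xi k))) := by
  intro Γ c d
  induction d with
  | assume a =>
    intro _ S hΓ hSU hCL hent _
    left
    have haS := hΓ a (Multiset.mem_singleton_self a)
    have hane : a ≠ xi k := entry_ne_K hk hent
    have hane2 : a ≠ tg k := by
      rcases hSU a haS with h | ⟨i, hi1, hi2, (h | h | h | h)⟩
      · exact absurd h hane
      · subst h; exact fun hh => tg_ne_atom_pos hi1 hh.symm
      · subst h; exact fun hh => tg_ne_Bf hh.symm
      · subst h; exact fun hh => tg_ne_Af hh.symm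
      · subst h; exact fun hh => tg_ne_DT hh.symm
    refine ⟨{a}, Deriv.assume a, trivial, fun h => h, ?_, ?_, ?_⟩
    · rw [Multiset.count_singleton, if_neg (fun hh => hane hh.symm)]
    · intro x _; exact le_rfl
    · rw [Multiset.count_singleton, if_neg (fun hh => hane2 hh.symm),
        Multiset.count_singleton]
      omega
  | intro n body ih =>
    rename_i Γ aa bb
    intro hn S hΓ hSU hCL hent hbf
    rw [normal_intro] at hn
    obtain ⟨j, hj1, hj2, hcase⟩ := entry_impl hk hent
    have key : lowF k aa ∧ Entry k bb ∧ (∀ l, bb ≠ Bf l) ∧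
        (∀ l, 1 ≤ l → l + 1 ≤ k → DT l = aa → S (Af l)) ∧ aa ≠ xi k ∧ aa ≠ tg k := by
      rcases hcase with ⟨rfl, rfl⟩ | ⟨rfl, rfl⟩ | ⟨rfl, rfl⟩ | ⟨rfl, rfl⟩
      · refine ⟨⟨j, hj1, hj2, Or.inr (Or.inr (Or.inl rfl))⟩, Entry_tg hk hj1 (by omega),
          ?_, ?_, ?_, ?_⟩
        · exact fun l hh => tg_ne_Bf hh
        · exact fun l _ _ hh => absurd hh.symm (Af_ne_DT j l)
        · exact fun hh => xi_ne_Af (by omega) hh.symm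
        · exact fun hh => tg_ne_Af hh.symm
      · refine ⟨⟨j, hj1, hj2, Or.inr (Or.inl rfl)⟩, Or.inr ⟨j, hj1, hj2, Or.inl rfl⟩,
          ?_, ?_, ?_, ?_⟩
        · exact fun l hh => Bf_ne_atom l j hh.symm
        · exact fun l _ _ hh => absurd hh.symm (Bf_ne_DT j l)
        · exact fun hh => xi_ne_Bf (by omega) hh.symm
        · exact fun hh => tg_ne_Bf hh.symm
      · refine ⟨⟨j, hj1, hj2, Or.inr (Or.inr (Or.inr rfl))⟩, Or.inr ⟨j, hj1, hj2, Or.inl rfl⟩,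
          ?_, ?_, ?_, ?_⟩
        · exact fun l hh => Bf_ne_atom l j hh.symm
        · intro l h1 h2 hh
          have hlj := DT_inj hh
          rw [hlj]
          exact hbf j hj1 hj2 rfl
        · exact fun hh => xi_ne_DT (by omega) hh.symm
        · exact fun hh => tg_ne_DT hh.symm
      · refine ⟨⟨j, hj1, hj2, Or.inl rfl⟩, Entry_tg hk hj1 (by omega), ?_, ?_, ?_, ?_⟩
        · exact fun l hh => tg_ne_Bf hh
        · exact fun l _ _ hh => absurd hh (DT_ne_atom l j)
        · exact fun hh => xi_ne_atom (by omega) hh.symm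
        · exact fun hh => tg_ne_atom_pos hj1 hh.symm
    obtain ⟨f1, f2, f3, f4, f5, f6⟩ := key
    have hres := ih hn (fun x => S x ∨ x = aa)
      (by
        intro x hx
        rcases Multiset.mem_add.mp hx with hx | hx
        · exact Or.inl (hΓ x hx)
        · exact Or.inr (Multiset.eq_of_mem_replicate hx))
      (by
        intro x hx
        rcases hx with hx | rfl
        · exact hSU x hx
        · exact Or.inr f1)
      (by
        intro l h1 h2 hDT
        rcases hDT with hDT | hDT
        · exact Or.inl (hCL l h1 h2 hDT)
        · exact Or.inl (f4 l h1 h2 hDT))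
      f2
      (by intro l _ _ hh; exact absurd hh (f3 l))
    have hxa : xi k ≠ aa := fun hh => f5 hh.symm
    have hta : tg k ≠ aa := fun hh => f6 hh.symm
    rcases hres with ⟨Δ, d', hd1, hd2, hd3, hd4, hd5⟩ | ⟨Γ', e, he1, he2, he3, he4⟩
    · left
      refine ⟨Δ.filter (· ≠ aa), Deriv.intro (Δ.count aa) (d'.cctx (filt_split Δ aa)),
        ?_, fun _ => trivial, ?_, ?_, ?_⟩
      · simpa using hd1
      · rw [count_filter_ne hxa, hd3]
      · intro x hx
        by_cases hxaa : x = aa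
        · subst hxaa; rw [count_filter_self]; omega
        · rw [count_filter_ne hxaa]
          have := hd4 x hx
          rw [Multiset.count_add, Multiset.count_replicate,
            if_neg (fun hh => hxaa hh.symm)] at this
          omega
      · rw [count_filter_ne hta]
        have := hd5
        rw [Multiset.count_add, Multiset.count_replicate,
          if_neg (fun hh => f5 hh)] at this
        omega
    · right
      refine ⟨Γ'.filter (· ≠ aa), Deriv.intro (Γ'.count aa) (e.cctx (filt_split Γ' aa)),
        ?_, ?_, ?_, ?_⟩
      · simpa using he1
      · intro h
        exact absurd trivial h
      · intro x hx
        have hx' := Multiset.mem_filter.mp hx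
        rcases he3 x hx'.1 with h | h
        · exact h
        · exact absurd h (by simpa using hx'.2)
      · rw [count_filter_ne hxa]
        have := he4
        rw [Multiset.count_add, Multiset.count_replicate,
          if_neg (fun hh => f5 hh)] at this
        omega
  | elim minor major ihm ihM =>
    rename_i Γ₁ Γ₂ aa cc
    intro hn S hΓ hSU hCL hent hbf
    obtain ⟨hm, hM, hni⟩ := hn
    have hΓ₁ : ∀ x ∈ Γ₁, S x := fun x hx => hΓ x (Multiset.mem_add.mpr (Or.inl hx))
    have hΓ₂ : ∀ x ∈ Γ₂, S x := fun x hx => hΓ x (Multiset.mem_add.mpr (Or.inr hx))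
    cases major with
    | assume =>
      have hgS := hΓ₂ (aa.impl cc) (Multiset.mem_singleton_self _)
      rcases hSU _ hgS with hg | ⟨j, hj1, hj2, (hg | hg | hg | hg)⟩
      · -- replacement case : the major is an assumption of ξ_k
        rw [xi_eq (by omega : 1 ≤ k)] at hg
        injection hg with u v
        subst u; subst v
        by_cases h0 : Γ₁.count (xi k) = 0
        · -- improvement
          right
          have hlow : ∀ x ∈ Γ₁, lowF k x := by
            intro x hx
            rcases hSU x (hΓ₁ x hx) with h | h
            · exfalso
              have : 0 < Γ₁.count (xi k) := Multiset.count_pos.mpr (h ▸ hx)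
              omega
            · exact h
          obtain ⟨l, hl1, hl2, hmemDT, hwit⟩ := Echain hk minor hm hlow
          have hSDT : S (DT l) := hΓ₁ _ hmemDT
          have hSAf : S (Af l) := hCL l hl1 hl2 hSDT
          have hbase : ∃ (Γu : Multiset Fm) (u : Deriv Γu (tg l)),
              u.normal ∧ Zok u ∧ (∀ x ∈ Γu, S x) ∧ Γu.count (xi k) = 0 := by
            rcases hwit with hA | hB
            · refine ⟨{Fm.atom l} + {DT l},
                Deriv.elim (Deriv.assume (Fm.atom l)) (Deriv.assume (DT l)),
                ⟨trivial, trivial, fun h => h⟩, trivial, ?_, ?_⟩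
              · intro x hx
                rcases Multiset.mem_add.mp hx with hx | hx
                · rw [Multiset.mem_singleton.mp hx]; exact hΓ₁ _ hA
                · rw [Multiset.mem_singleton.mp hx]; exact hSDT
              · rw [Multiset.count_add, Multiset.count_singleton,
                  if_neg (fun hh => xi_ne_atom (by omega : 1 ≤ k) hh),
                  Multiset.count_singleton, if_neg (fun hh => xi_ne_DT (by omega : 1 ≤ k) hh)]
            · refine ⟨({Bf l} + {Af l}) + {DT l},
                Deriv.elim (Deriv.elim (Deriv.assume (Bf l)) (Deriv.assume (Af l)))
                  (Deriv.assume (DT l)),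
                ⟨⟨trivial, trivial, fun h => h⟩, trivial, fun h => h⟩, trivial, ?_, ?_⟩
              · intro x hx
                rcases Multiset.mem_add.mp hx with hx | hx
                · rcases Multiset.mem_add.mp hx with hx | hx
                  · rw [Multiset.mem_singleton.mp hx]; exact hΓ₁ _ hB
                  · rw [Multiset.mem_singleton.mp hx]; exact hSAf
                · rw [Multiset.mem_singleton.mp hx]; exact hSDT
              · rw [Multiset.count_add, Multiset.count_add, Multiset.count_singleton,
                  if_neg (fun hh => xi_ne_Bf (by omega : 1 ≤ k) hh),
                  Multiset.count_singleton, if_neg (fun hh => xi_ne_Af (by omega : 1 ≤ k) hh),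
                  Multiset.count_singleton, if_neg (fun hh => xi_ne_DT (by omega : 1 ≤ k) hh)]
          obtain ⟨Γu, u, hu1, hu2, hu3, hu4⟩ := hbase
          obtain ⟨e, he1, he2⟩ := liftDeriv hk (k - l) l hl1 u hu1 hu2
          have hkl : tg (l + (k - l)) = tg k := by rw [Nat.add_sub_cancel' (by omega : l ≤ k)]
          refine ⟨Γu, e.ccon hkl, by simpa using he1, fun _ => by simpa using he2, hu3, ?_⟩
          rw [hu4, Multiset.count_add, Multiset.count_singleton,
            if_pos (xi_eq (by omega : 1 ≤ k))]
          omega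
        · -- small replacement
          left
          refine ⟨{tg k}, Deriv.assume (tg k), trivial, fun h => h.elim, ?_, ?_, ?_⟩
          · rw [Multiset.count_singleton, if_neg (xi_ne_tg hk)]
          · intro x hx
            rw [Multiset.count_singleton, if_neg hx]
            omega
          · rw [Multiset.count_singleton, if_pos rfl, Multiset.count_add,
              Multiset.count_singleton, if_pos (xi_eq (by omega : 1 ≤ k))]
            omega
      · exact absurd hg (by simp)
      · -- the major is an assumption of Bf j : minor proves DT j
        simp only [Bf] at hg; injection hg with u v
        subst u; subst v
        have hres := ihm hm S hΓ₁ hSU hCL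
          (Or.inr ⟨j, hj1, hj2, Or.inr (Or.inr (Or.inr (Or.inr rfl)))⟩)
          (by intro l _ _ hh; exact absurd hh.symm (Bf_ne_DT l j))
        have hx1 : xi k ≠ (DT j).impl (Fm.atom j) := fun hh => xi_ne_Bf (by omega : 1 ≤ k) hh
        have hx2 : tg k ≠ (DT j).impl (Fm.atom j) := fun hh => tg_ne_Bf hh
        rcases hres with ⟨Δ, d', hd1, hd2, hd3, hd4, hd5⟩ | ⟨Γ', e, he1, he2, he3, he4⟩
        · left
          refine ⟨Δ + {(DT j).impl (Fm.atom j)},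
            Deriv.elim d' (Deriv.assume ((DT j).impl (Fm.atom j))),
            ⟨hd1, trivial, by simp⟩, fun h => h.elim, ?_, ?_, ?_⟩
          · rw [Multiset.count_add, hd3, Multiset.count_singleton, if_neg hx1]
          · intro x hx
            rw [Multiset.count_add, Multiset.count_add]
            exact Nat.add_le_add_right (hd4 x hx) _
          · rw [Multiset.count_add, Multiset.count_add, Multiset.count_singleton,
              Multiset.count_singleton, if_neg hx1, if_neg hx2]
            omega
        · right
          refine ⟨Γ' + {(DT j).impl (Fm.atom j)},
            Deriv.elim e (Deriv.assume ((DT j).impl (Fm.atom j))),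
            ⟨he1, trivial, by simp⟩, fun _ => trivial, ?_, ?_⟩
          · intro x hx
            rcases Multiset.mem_add.mp hx with hx | hx
            · exact he3 x hx
            · rw [Multiset.mem_singleton.mp hx]; exact hgS
          · rw [Multiset.count_add, Multiset.count_add]
            exact Nat.add_lt_add_right he4 _
      · -- the major is an assumption of Af j : minor proves Bf j
        simp only [Af] at hg; injection hg with u v
        subst u; subst v
        have hres := ihm hm S hΓ₁ hSU hCL
          (Or.inr ⟨j, hj1, hj2, Or.inr (Or.inr (Or.inr (Or.inl rfl)))⟩)
          (by
            intro l _ _ hh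
            have := Bf_inj hh
            subst this
            exact hgS)
        have hx1 : xi k ≠ (Bf j).impl (Fm.atom j) := fun hh => xi_ne_Af (by omega : 1 ≤ k) hh
        have hx2 : tg k ≠ (Bf j).impl (Fm.atom j) := fun hh => tg_ne_Af hh
        rcases hres with ⟨Δ, d', hd1, hd2, hd3, hd4, hd5⟩ | ⟨Γ', e, he1, he2, he3, he4⟩
        · left
          refine ⟨Δ + {(Bf j).impl (Fm.atom j)},
            Deriv.elim d' (Deriv.assume ((Bf j).impl (Fm.atom j))),
            ⟨hd1, trivial, by simp⟩, fun h => h.elim, ?_, ?_, ?_⟩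
          · rw [Multiset.count_add, hd3, Multiset.count_singleton, if_neg hx1]
          · intro x hx
            rw [Multiset.count_add, Multiset.count_add]
            exact Nat.add_le_add_right (hd4 x hx) _
          · rw [Multiset.count_add, Multiset.count_add, Multiset.count_singleton,
              Multiset.count_singleton, if_neg hx1, if_neg hx2]
            omega
        · right
          refine ⟨Γ' + {(Bf j).impl (Fm.atom j)},
            Deriv.elim e (Deriv.assume ((Bf j).impl (Fm.atom j))),
            ⟨he1, trivial, by simp⟩, fun _ => trivial, ?_, ?_⟩
          · intro x hx
            rcases Multiset.mem_add.mp hx with hx | hx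
            · exact he3 x hx
            · rw [Multiset.mem_singleton.mp hx]; exact hgS
          · rw [Multiset.count_add, Multiset.count_add]
            exact Nat.add_lt_add_right he4 _
      · -- the major is an assumption of DT j : minor proves atom j
        simp only [DT] at hg; injection hg with u v
        subst u; subst v
        have hres := ihm hm S hΓ₁ hSU hCL
          (Or.inr ⟨j, hj1, hj2, Or.inl rfl⟩)
          (by intro l _ _ hh; exact absurd hh (Bf_ne_atom l j).symm)
        have hx1 : xi k ≠ (Fm.atom j).impl (tg j) := fun hh => xi_ne_DT (by omega : 1 ≤ k) hh
        have hx2 : tg k ≠ (Fm.atom j).impl (tg j) := fun hh => tg_ne_DT hh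
        rcases hres with ⟨Δ, d', hd1, hd2, hd3, hd4, hd5⟩ | ⟨Γ', e, he1, he2, he3, he4⟩
        · left
          refine ⟨Δ + {(Fm.atom j).impl (tg j)},
            Deriv.elim d' (Deriv.assume ((Fm.atom j).impl (tg j))),
            ⟨hd1, trivial, by simp⟩, fun h => h.elim, ?_, ?_, ?_⟩
          · rw [Multiset.count_add, hd3, Multiset.count_singleton, if_neg hx1]
          · intro x hx
            rw [Multiset.count_add, Multiset.count_add]
            exact Nat.add_le_add_right (hd4 x hx) _
          · rw [Multiset.count_add, Multiset.count_add, Multiset.count_singleton,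
              Multiset.count_singleton, if_neg hx1, if_neg hx2]
            omega
        · right
          refine ⟨Γ' + {(Fm.atom j).impl (tg j)},
            Deriv.elim e (Deriv.assume ((Fm.atom j).impl (tg j))),
            ⟨he1, trivial, by simp⟩, fun _ => trivial, ?_, ?_⟩
          · intro x hx
            rcases Multiset.mem_add.mp hx with hx | hx
            · exact he3 x hx
            · rw [Multiset.mem_singleton.mp hx]; exact hgS
          · rw [Multiset.count_add, Multiset.count_add]
            exact Nat.add_lt_add_right he4 _
    | intro nn dd => simp [Deriv.isIntro] at hni
    | elim m2 M2 =>
      obtain ⟨g, hg, hpt⟩ := spine _ hM trivial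
      have hgS := hΓ₂ g hg
      have hgt' : g = xi k ∨ g = Bf k ∨ g = Fm.atom k ∨ lowF k g := by
        rcases hSU g hgS with h | h
        · exact Or.inl h
        · exact Or.inr (Or.inr (Or.inr h))
      rcases ptails_char hk hgt' hpt with ⟨j', hj', hj2⟩ | ⟨i, hi1, hi2, hi3⟩
      · exact absurd hj2 (by simp)
      · rw [xi_eq hi1] at hi3
        injection hi3 with u v
        subst u; subst v
        have hresM := ihM hM S hΓ₂ hSU hCL
          (Or.inr ⟨i, hi1, hi2, Or.inr (Or.inl (xi_eq hi1).symm)⟩)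
          (by
            intro l _ _ hh
            exact absurd ((xi_eq hi1).trans hh) (xi_ne_Bf hi1))
        rcases hresM with ⟨ΔM, dM', hM1, hM2, hM3, hM4, hM5⟩ | ⟨Γ'M, eM, hE1, hE2, hE3, hE4⟩
        · -- major transformed, recurse on the minor
          have hresm := ihm hm S hΓ₁ hSU hCL
            (Or.inr ⟨i, hi1, hi2, Or.inr (Or.inr (Or.inl rfl))⟩)
            (by intro l _ _ hh; exact absurd hh (Af_ne_Bf i l))
          rcases hresm with ⟨Δm, dm', hm1, hm2, hm3, hm4, hm5⟩ | ⟨Γ'm, em, he1, he2, he3, he4⟩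
          · left
            refine ⟨Δm + ΔM, Deriv.elim dm' dM', ⟨hm1, hM1, hM2⟩, fun h => h.elim, ?_, ?_, ?_⟩
            · rw [Multiset.count_add, hm3, hM3]
            · intro x hx
              rw [Multiset.count_add, Multiset.count_add]
              exact Nat.add_le_add (hm4 x hx) (hM4 x hx)
            · rw [Multiset.count_add, Multiset.count_add]
              omega
          · right
            refine ⟨Γ'm + _, Deriv.elim em (Deriv.elim m2 M2), ⟨he1, hM, fun h => h⟩,
              fun _ => trivial, ?_, ?_⟩
            · intro x hx
              rcases Multiset.mem_add.mp hx with hx | hx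
              · exact he3 x hx
              · exact hΓ₂ x hx
            · simp only [Multiset.count_add] at he4 ⊢
              omega
        · -- major improved : absorb
          right
          have hZ : Zok eM := hE2 (by simp)
          cases eM with
          | assume =>
            refine ⟨Γ₁ + {(Af i).impl (tg i)}, Deriv.elim minor (Deriv.assume _),
              ⟨hm, trivial, fun h => h⟩, fun _ => trivial, ?_, ?_⟩
            · intro x hx
              rcases Multiset.mem_add.mp hx with hx | hx
              · exact hΓ₁ x hx
              · rw [Multiset.mem_singleton.mp hx]
                exact hE3 _ (Multiset.mem_singleton_self _)
            · simp only [Multiset.count_add] at hE4 ⊢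
              omega
          | intro nE eB =>
            obtain ⟨rfl, hzB⟩ := hZ
            refine ⟨Γ'M, eB.cctx (by simp), ?_, fun _ => (cctx_Zok _ eB).mpr hzB, hE3, ?_⟩
            · exact (cctx_normal _ eB).mpr hE1
            · simp only [Multiset.count_add] at hE4 ⊢
              omega
          | elim e1 e2 =>
            refine ⟨Γ₁ + _, Deriv.elim minor (Deriv.elim e1 e2), ⟨hm, hE1, fun h => h⟩,
              fun _ => trivial, ?_, ?_⟩
            · intro x hx
              rcases Multiset.mem_add.mp hx with hx | hx
              · exact hΓ₁ x hx
              · exact hE3 x hx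
            · simp only [Multiset.count_add] at hE4 ⊢
              omega

-- ===================== top level =====================

lemma AUX {k : ℕ} (hk : 2 ≤ k) : ∀ n, n < 2 ^ k →
    ∀ (d : Deriv (Multiset.replicate n (xi k)) (Fm.atom 0)), d.normal →
    ∃ m : ℕ, m < 2 ^ (k - 1) ∧
      ∃ d' : Deriv ((0 : Multiset Fm) + Multiset.replicate m (xi (k - 1))) (Fm.atom 0),
        (Deriv.intro m d' : Deriv 0 (phi (k - 1))).normal := by
  intro n
  induction n using Nat.strong_induction_on with
  | _ n ih =>
    intro hn d hd
    have hres := Main hk d hd (fun x => x = xi k)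
      (fun x hx => Multiset.eq_of_mem_replicate hx)
      (fun x hx => Or.inl hx)
      (by intro l h1 _ hDT; exact absurd hDT.symm (xi_ne_DT (by omega)))
      (Or.inl rfl)
      (by intro l _ _ hh; exact absurd hh (fun hh' => Bf_ne_atom l 0 hh'.symm))
    rcases hres with ⟨Δ, d', hd1, _, hd3, hd4, hd5⟩ | ⟨Γ', e, he1, _, he3, he4⟩
    · have hpow : 2 ^ k = 2 * 2 ^ (k - 1) := by
        conv_lhs => rw [show k = (k - 1) + 1 by omega]
        rw [pow_succ]
        ring
      have hcnt : Multiset.count (xi k) (Multiset.replicate n (xi k)) = n :=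
        Multiset.count_replicate_self _ _
      set m := Δ.count (tg k) with hmdef
      have h2m : 2 * m ≤ n := by rw [← hcnt]; exact hd5
      have hΔ : Δ = Multiset.replicate m (tg k) := by
        ext x
        rw [Multiset.count_replicate]
        by_cases hx : tg k = x
        · rw [if_pos hx, ← hx]
        · rw [if_neg hx]
          by_cases hxk : x = xi k
          · subst hxk; exact hd3
          · have h4 := hd4 x (fun hh => hx hh.symm)
            rw [Multiset.count_replicate, if_neg (fun hh => hxk hh.symm)] at h4
            omega
      refine ⟨m, by omega, d'.cctx ?_, ?_⟩
      · rw [hΔ, zero_add, tg_ge2 hk]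
      · rw [normal_intro]
        simpa using hd1
    · have hrep : Γ' = Multiset.replicate (Multiset.card Γ') (xi k) :=
        Multiset.eq_replicate_card.mpr he3
      have hlt : Multiset.card Γ' < n := by
        have h5 := he4
        rw [Multiset.count_replicate_self] at h5
        calc Multiset.card Γ' = Multiset.count (xi k) Γ' := by
              rw [hrep, Multiset.count_replicate_self, Multiset.card_replicate]
          _ < n := h5
      exact ih (Multiset.card Γ') hlt (by omega) (e.cctx hrep) (by simpa using he1)


/-- for k ≥ 2, if there is a normal proof of φ_k whose last rule
(an →-introduction) discharges fewer than 2^k occurrences of ξ_k, then there is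
a normal proof of φ_{k-1} whose last rule discharges fewer than 2^(k-1)
occurrences of ξ_{k-1}. -/
theorem descend_small_proof (k : ℕ) (hk : 2 ≤ k)
    (h : ∃ n : ℕ, n < 2 ^ k ∧
      ∃ d : Deriv ((0 : Multiset Fm) + Multiset.replicate n (xi k)) (.atom 0),
        (Deriv.intro n d : Deriv 0 (phi k)).normal) :
    ∃ m : ℕ, m < 2 ^ (k - 1) ∧
      ∃ d' : Deriv ((0 : Multiset Fm) + Multiset.replicate m (xi (k - 1))) (.atom 0),
        (Deriv.intro m d' : Deriv 0 (phi (k - 1))).normal := by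
  obtain ⟨n, hn, d, hd⟩ := h
  exact AUX hk n hn (d.cctx (zero_add _)) (by simpa using hd)
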